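/- Let i ∈ N and suppose the subdigraph Γ_F^i has a component C_{∅_M} containing the empty profile ∅_M. For each q ∈ M let D^i_q = {K ∈ F_q : (∅, K) ∈ E_{F_q} and i ∈ K} ∪ {∅}, and let D^i = ∏_{q∈M} D^i_q. Then C_{∅_M} = D^i. -/

import Mathlib

open scoped Classical
open Finset

namespace GCC

variable {α ι : Type*} [Fintype α] [DecidableEq α] [Fintype ι] [DecidableEq ι]

/-- `K'` covers `K` in the set system `Fq`: both are feasible, `K ⊂ K'`, and no feasible
coalition lies strictly between them. -/
def coverEdge (Fq : Finset (Finset α)) (K K' : Finset α) : Prop :=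
  K ∈ Fq ∧ K' ∈ Fq ∧ K ⊂ K' ∧ ∀ K'' ∈ Fq, K ⊆ K'' → K'' ⊂ K' → K'' = K

/-- A generalized coalition configuration: the coalitions `P q` are nonempty and cover the
agent set, and each `(P q, F q)` is a normal set system. -/
def IsGCC (P : ι → Finset α) (F : ι → Finset (Finset α)) : Prop :=
  (∀ q, (P q).Nonempty) ∧ (∀ i : α, ∃ q, i ∈ P q) ∧
    (∀ q, ∀ K ∈ F q, K ⊆ P q) ∧ (∀ q, (∅ : Finset α) ∈ F q) ∧ ∀ q, P q ∈ F q

/-- A coalition profile is feasible if each coordinate is a feasible coalition. -/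
def Feasible (F : ι → Finset (Finset α)) (K : ι → Finset α) : Prop :=
  ∀ q, K q ∈ F q

/-- The empty coalition profile `∅_M`. -/
def emptyProfile : ι → Finset α := fun _ => ∅

/-- Directed edge of the product digraph `Γ_F`: both endpoints feasible, and the
profiles agree everywhere except at a (necessarily unique) coordinate `q`, where a
covering step of `Γ_{F q}` occurs. -/
def prodEdge (F : ι → Finset (Finset α)) (K K' : ι → Finset α) : Prop :=
  Feasible F K ∧ Feasible F K' ∧
    ∃ q, coverEdge (F q) (K q) (K' q) ∧ ∀ r, r ≠ q → K' r = K r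

/-- The set `Q_{(K,K')}` of agents entering along the edge `(K, K')`. -/
def Qset (K K' : ι → Finset α) : Finset α :=
  Finset.univ.biUnion fun q => K' q \ K q

/-- Edge of the subdigraph `Γ_F^i` of agent `i`. -/
def agentEdge (F : ι → Finset (Finset α)) (i : α) (K K' : ι → Finset α) : Prop :=
  prodEdge F K K' ∧ i ∈ Qset K K'

/-- Flow conservation on the product digraph (at every vertex other than `∅_M` and `P`). -/
def IsFlow (P : ι → Finset α) (F : ι → Finset (Finset α))
    (Λ : (ι → Finset α) → (ι → Finset α) → ℝ) : Prop :=
  ∀ K : ι → Finset α, Feasible F K → K ≠ emptyProfile → K ≠ P →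
    (∑ K' : ι → Finset α, if prodEdge F K' K then Λ K' K else 0)
      = ∑ K' : ι → Finset α, if prodEdge F K K' then Λ K K' else 0

/-- The value of a flow on the product digraph: the total flow out of `∅_M`. -/
noncomputable def flowValue (F : ι → Finset (Finset α))
    (Λ : (ι → Finset α) → (ι → Finset α) → ℝ) : ℝ :=
  ∑ K : ι → Finset α, if prodEdge F emptyProfile K then Λ emptyProfile K else 0

/-- A unitary flow on the product digraph. -/
def IsUnitaryFlow (P : ι → Finset α) (F : ι → Finset (Finset α))
    (Λ : (ι → Finset α) → (ι → Finset α) → ℝ) : Prop :=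
  IsFlow P F Λ ∧ flowValue F Λ = 1

/-- `Φ` is marginalist with coefficient functions `lam`. -/
def MarginalistWith (F : ι → Finset (Finset α))
    (Φ : ((ι → Finset α) → ℝ) → α → ℝ)
    (lam : α → (ι → Finset α) → (ι → Finset α) → ℝ) : Prop :=
  ∀ v : (ι → Finset α) → ℝ, v emptyProfile = 0 → ∀ i : α,
    Φ v i = ∑ K : ι → Finset α, ∑ K' : ι → Finset α,
      if agentEdge F i K K' then lam i K K' * (v K' - v K) else 0

/-- `Φ` is a marginalist value. -/
def IsMarginalist (F : ι → Finset (Finset α))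
    (Φ : ((ι → Finset α) → ℝ) → α → ℝ) : Prop :=
  ∃ lam, MarginalistWith F Φ lam

/-- The edge function `Λ^Φ` induced by coefficient functions `lam`. -/
def edgeFlow (lam : α → (ι → Finset α) → (ι → Finset α) → ℝ)
    (K K' : ι → Finset α) : ℝ :=
  ∑ i ∈ Qset K K', lam i K K'

/-- `Φ` is a flow method: a marginalist value whose coefficients induce a unitary flow on
the product digraph. -/
def IsFlowMethod (P : ι → Finset α) (F : ι → Finset (Finset α))
    (Φ : ((ι → Finset α) → ℝ) → α → ℝ) : Prop :=
  ∃ lam, MarginalistWith F Φ lam ∧ IsUnitaryFlow P F (edgeFlow lam)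

/-- Linearity of a value. -/
def Linear (Φ : ((ι → Finset α) → ℝ) → α → ℝ) : Prop :=
  ∀ v v' : (ι → Finset α) → ℝ, v emptyProfile = 0 → v' emptyProfile = 0 → ∀ a : ℝ, ∀ i : α,
    Φ (fun K => a * v K + v' K) i = a * Φ v i + Φ v' i

/-- Agent `i` is null in `v`. -/
def NullIn (F : ι → Finset (Finset α)) (v : (ι → Finset α) → ℝ) (i : α) : Prop :=
  ∀ K K', agentEdge F i K K' → v K = v K'

/-- The Null agent axiom. -/
def NullAgentAxiom (F : ι → Finset (Finset α))
    (Φ : ((ι → Finset α) → ℝ) → α → ℝ) : Prop :=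
  ∀ v : (ι → Finset α) → ℝ, v emptyProfile = 0 → ∀ i : α, NullIn F v i → Φ v i = 0

/-- Efficiency: the worth of the coalition configuration is fully distributed. -/
def Efficient (P : ι → Finset α) (Φ : ((ι → Finset α) → ℝ) → α → ℝ) : Prop :=
  ∀ v : (ι → Finset α) → ℝ, v emptyProfile = 0 → (∑ i : α, Φ v i) = v P

/-- Symmetrized edge relation of `Γ_F^i` (quasi-path steps). -/
def symmEdge (F : ι → Finset (Finset α)) (i : α) (K K' : ι → Finset α) : Prop :=
  agentEdge F i K K' ∨ agentEdge F i K' K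

/-- `C` is a component of the subdigraph `Γ_F^i`: a maximal set of vertices of `Γ_F^i`
pairwise connected by quasi-paths. -/
def IsComponent (F : ι → Finset (Finset α)) (i : α)
    (C : Finset (ι → Finset α)) : Prop :=
  (∀ K ∈ C, ∃ K', symmEdge F i K K') ∧
    (∀ K ∈ C, ∀ K' ∈ C, Relation.ReflTransGen (symmEdge F i) K K') ∧
    ∀ C' : Finset (ι → Finset α), C ⊆ C' →
      (∀ K ∈ C', ∃ K'', symmEdge F i K K'') →
      (∀ K ∈ C', ∀ K' ∈ C', Relation.ReflTransGen (symmEdge F i) K K') → C' = C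

/-- The profile `K_S`: coordinate `P r` for `r ∈ S` and `∅` elsewhere. -/
def profileS (P : ι → Finset α) (S : Finset ι) : ι → Finset α :=
  fun r => if r ∈ S then P r else ∅

/-- The relevant profile `K_{S,K_q}`: coordinate `K_q` at `q`, `P r` for `r ∈ S ∖ {q}`,
and `∅` elsewhere. -/
def profileSK (P : ι → Finset α) (S : Finset ι) (q : ι) (Kq : Finset α) :
    ι → Finset α :=
  fun r => if r = q then Kq else if r ∈ S then P r else ∅

/-- Support `μ(K)` of a coalition profile. -/
def support (K : ι → Finset α) : Finset ι :=
  Finset.univ.filter fun q => K q ≠ ∅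

/-- A relevant coalition profile: feasible, and all coordinates except possibly one are
either full (`P r`) or empty. -/
def IsRelevantProfile (P : ι → Finset α) (F : ι → Finset (Finset α))
    (K : ι → Finset α) : Prop :=
  Feasible F K ∧ ∃ q, ∀ r, r ≠ q → K r = P r ∨ K r = ∅

/-- A relevant directed edge of the product digraph. -/
def relevantEdge (P : ι → Finset α) (F : ι → Finset (Finset α))
    (K K' : ι → Finset α) : Prop :=
  prodEdge F K K' ∧ IsRelevantProfile P F K ∧ IsRelevantProfile P F K'

/-- Edge of the `m`-dimensional directed hypercube `Γ_{F_M}` (vertices `R_S ≅ S ⊆ M`). -/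
def hcEdge (S T : Finset ι) : Prop :=
  ∃ q, q ∉ S ∧ T = insert q S

/-- Flow conservation on the directed hypercube. -/
def hcIsFlow (Λ : Finset ι → Finset ι → ℝ) : Prop :=
  ∀ S : Finset ι, S ≠ ∅ → S ≠ Finset.univ →
    (∑ T : Finset ι, if hcEdge T S then Λ T S else 0)
      = ∑ T : Finset ι, if hcEdge S T then Λ S T else 0

/-- The value of a flow on the directed hypercube. -/
noncomputable def hcFlowValue (Λ : Finset ι → Finset ι → ℝ) : ℝ :=
  ∑ T : Finset ι, if hcEdge ∅ T then Λ ∅ T else 0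

/-- Unitary flow on the directed hypercube. -/
def hcIsUnitaryFlow (Λ : Finset ι → Finset ι → ℝ) : Prop :=
  hcIsFlow Λ ∧ hcFlowValue Λ = 1

/-- Flow conservation on the covering digraph `Γ_{F_q}` of a set system. -/
def lowIsFlow (Fq : Finset (Finset α)) (Pq : Finset α)
    (Λ : Finset α → Finset α → ℝ) : Prop :=
  ∀ K ∈ Fq, K ≠ ∅ → K ≠ Pq →
    (∑ K' : Finset α, if coverEdge Fq K' K then Λ K' K else 0)
      = ∑ K' : Finset α, if coverEdge Fq K K' then Λ K K' else 0

/-- The value of a flow on `Γ_{F_q}`. -/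
noncomputable def lowFlowValue (Fq : Finset (Finset α)) (Λ : Finset α → Finset α → ℝ) : ℝ :=
  ∑ K' : Finset α, if coverEdge Fq ∅ K' then Λ ∅ K' else 0

/-- Unitary flow on `Γ_{F_q}`. -/
def lowIsUnitaryFlow (Fq : Finset (Finset α)) (Pq : Finset α)
    (Λ : Finset α → Finset α → ℝ) : Prop :=
  lowIsFlow Fq Pq Λ ∧ lowFlowValue Fq Λ = 1

/-- Marginalist value on the upper games (played on the directed hypercube by the
elements of `M`). -/
def hcMarginalistWith (ΦM : (Finset ι → ℝ) → ι → ℝ)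
    (lamM : ι → Finset ι → Finset ι → ℝ) : Prop :=
  ∀ vM : Finset ι → ℝ, vM ∅ = 0 → ∀ q : ι,
    ΦM vM q = ∑ S : Finset ι,
      if q ∉ S then lamM q S (insert q S) * (vM (insert q S) - vM S) else 0

/-- The edge flow induced on the hypercube by coefficient functions `lamM`. -/
def hcEdgeFlow (lamM : ι → Finset ι → Finset ι → ℝ) :
    Finset ι → Finset ι → ℝ :=
  fun S T => ∑ q ∈ T \ S, lamM q S T

/-- Flow method on the upper games. -/
def hcIsFlowMethodWith (ΦM : (Finset ι → ℝ) → ι → ℝ)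
    (lamM : ι → Finset ι → Finset ι → ℝ) : Prop :=
  hcMarginalistWith ΦM lamM ∧ hcIsUnitaryFlow (hcEdgeFlow lamM)

/-- Marginalist value on the `q`-lower games (played on `Γ_{F_q}` by the agents of `P_q`). -/
def lowMarginalistWith (Fq : Finset (Finset α))
    (Φq : (Finset α → ℝ) → α → ℝ) (lamq : α → Finset α → Finset α → ℝ) : Prop :=
  ∀ vq : Finset α → ℝ, vq ∅ = 0 → ∀ i : α,
    Φq vq i = ∑ K : Finset α, ∑ K' : Finset α,
      if coverEdge Fq K K' ∧ i ∈ K' \ K then lamq i K K' * (vq K' - vq K) else 0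

/-- The edge flow induced on `Γ_{F_q}` by coefficient functions `lamq`. -/
def lowEdgeFlow (lamq : α → Finset α → Finset α → ℝ) :
    Finset α → Finset α → ℝ :=
  fun K K' => ∑ i ∈ K' \ K, lamq i K K'

/-- Flow method on the `q`-lower games. -/
def lowIsFlowMethodWith (Fq : Finset (Finset α)) (Pq : Finset α)
    (Φq : (Finset α → ℝ) → α → ℝ) (lamq : α → Finset α → Finset α → ℝ) : Prop :=
  lowMarginalistWith Fq Φq lamq ∧ lowIsUnitaryFlow Fq Pq (lowEdgeFlow lamq)

/-- The `K_q`-upper game `v_M^{K_q}` obtained from a coalition profile function `v`. -/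
def upperGame (P : ι → Finset α) (v : (ι → Finset α) → ℝ) (q : ι)
    (Kq : Finset α) : Finset ι → ℝ :=
  fun S => if q ∈ S then v (profileSK P S q Kq) else v (profileS P S)

/-- The `q`-lower game `v_q` obtained from `v` and the upper flow method `Φ^M`. -/
def lowerGame (P : ι → Finset α) (ΦM : (Finset ι → ℝ) → ι → ℝ)
    (v : (ι → Finset α) → ℝ) (q : ι) : Finset α → ℝ :=
  fun Kq => ΦM (upperGame P v q Kq) q

/-- `Φ0` is obtained from `Φ^M` and the `Φ^q`'s through the two-step procedure. -/
def TwoStepOf (P : ι → Finset α) (ΦM : (Finset ι → ℝ) → ι → ℝ)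
    (Φq : ι → (Finset α → ℝ) → α → ℝ)
    (Φ0 : ((ι → Finset α) → ℝ) → α → ℝ) : Prop :=
  ∀ v : (ι → Finset α) → ℝ, v emptyProfile = 0 → ∀ i : α,
    Φ0 v i = ∑ q : ι, if i ∈ P q then Φq q (lowerGame P ΦM v q) i else 0

/-- `Φ0` is a two-step flow method. -/
def IsTwoStepFlowMethod (P : ι → Finset α) (F : ι → Finset (Finset α))
    (Φ0 : ((ι → Finset α) → ℝ) → α → ℝ) : Prop :=
  ∃ (ΦM : (Finset ι → ℝ) → ι → ℝ) (lamM : ι → Finset ι → Finset ι → ℝ)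
    (Φq : ι → (Finset α → ℝ) → α → ℝ) (lamq : ι → α → Finset α → Finset α → ℝ),
    hcIsFlowMethodWith ΦM lamM ∧
      (∀ q, lowIsFlowMethodWith (F q) (P q) (Φq q) (lamq q)) ∧
      TwoStepOf P ΦM Φq Φ0

/-- Null flow for non-relevant directed edges. -/
def NullFlowNonRelevant (P : ι → Finset α) (F : ι → Finset (Finset α))
    (Λ : (ι → Finset α) → (ι → Finset α) → ℝ) : Prop :=
  ∀ K K', prodEdge F K K' → ¬ relevantEdge P F K K' → Λ K K' = 0

/-- Flow proportionality between relevant directed edges. -/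
def FlowProportionality (P : ι → Finset α) (F : ι → Finset (Finset α))
    (Λ : (ι → Finset α) → (ι → Finset α) → ℝ) : Prop :=
  ∀ q : ι, ∀ Kq K'q Lq L'q : Finset α,
    coverEdge (F q) Kq K'q → coverEdge (F q) Lq L'q →
    ∀ S S' : Finset ι, q ∈ S → q ∈ S' →
      Λ (profileSK P S q Kq) (profileSK P S q K'q)
          * Λ (profileSK P S' q Lq) (profileSK P S' q L'q)
        = Λ (profileSK P S' q Kq) (profileSK P S' q K'q)
            * Λ (profileSK P S q Lq) (profileSK P S q L'q)

/-- A two-step flow on the product digraph: decomposable as the product of a unitary flow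
on the hypercube and unitary flows on the digraphs `Γ_{F_q}`. -/
def IsTwoStepFlow (P : ι → Finset α) (F : ι → Finset (Finset α))
    (Λ : (ι → Finset α) → (ι → Finset α) → ℝ) : Prop :=
  ∃ (ΛM : Finset ι → Finset ι → ℝ) (Λq : ι → Finset α → Finset α → ℝ),
    hcIsUnitaryFlow ΛM ∧ (∀ q, lowIsUnitaryFlow (F q) (P q) (Λq q)) ∧
      (∀ (S : Finset ι) (q : ι), q ∈ S → ∀ Kq K'q : Finset α,
        coverEdge (F q) Kq K'q →
          Λ (profileSK P S q Kq) (profileSK P S q K'q)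
            = ΛM (S.erase q) S * Λq q Kq K'q) ∧
      ∀ K K', prodEdge F K K' → ¬ relevantEdge P F K K' → Λ K K' = 0

/-- The union `u(K)` of the coalitions of a profile. -/
def unionP (K : ι → Finset α) : Finset α :=
  Finset.univ.biUnion K

/-- The set `F^0` of reachable coalitions. -/
noncomputable def ReachableSet (F : ι → Finset (Finset α)) : Finset (Finset α) :=
  Finset.univ.filter fun R => ∃ K : ι → Finset α, Feasible F K ∧ unionP K = R

/-- Edge of the digraph `Γ*_{F^0}` of reachable coalitions. -/
def starEdge (F : ι → Finset (Finset α)) (R R' : Finset α) : Prop :=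
  R ≠ R' ∧ ∃ K K' : ι → Finset α, prodEdge F K K' ∧ unionP K = R ∧ unionP K' = R'

/-- Marginalist value on games with restricted cooperation `(N, v, F⁰, P)`, relative to an
edge relation `E0` on coalitions. -/
def setMarginalistWith (E0 : Finset α → Finset α → Prop)
    (φ : (Finset α → ℝ) → α → ℝ) (lam : α → Finset α → Finset α → ℝ) : Prop :=
  ∀ v : Finset α → ℝ, v ∅ = 0 → ∀ i : α,
    φ v i = ∑ R : Finset α, ∑ R' : Finset α,
      if E0 R R' ∧ i ∈ R' \ R then lam i R R' * (v R' - v R) else 0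

/-- Flow conservation on the digraph `(F0, E0)` with source `∅` and sink `N = univ`. -/
def setIsFlow (F0 : Finset (Finset α)) (E0 : Finset α → Finset α → Prop)
    (Λ : Finset α → Finset α → ℝ) : Prop :=
  ∀ R ∈ F0, R ≠ ∅ → R ≠ Finset.univ →
    (∑ R' : Finset α, if E0 R' R then Λ R' R else 0)
      = ∑ R' : Finset α, if E0 R R' then Λ R R' else 0

/-- Value of a flow on the digraph `(F0, E0)`. -/
noncomputable def setFlowValue (E0 : Finset α → Finset α → Prop)
    (Λ : Finset α → Finset α → ℝ) : ℝ :=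
  ∑ R' : Finset α, if E0 ∅ R' then Λ ∅ R' else 0

/-- Flow method on games with restricted cooperation relative to `(F0, E0)`. -/
def setIsFlowMethod (F0 : Finset (Finset α)) (E0 : Finset α → Finset α → Prop)
    (φ : (Finset α → ℝ) → α → ℝ) : Prop :=
  ∃ lam : α → Finset α → Finset α → ℝ,
    setMarginalistWith E0 φ lam ∧
      setIsFlow F0 E0 (fun R R' => ∑ i ∈ R' \ R, lam i R R') ∧
      setFlowValue E0 (fun R R' => ∑ i ∈ R' \ R, lam i R R') = 1

/-- A regular set system: every maximal path of its covering digraph has length `|P_q|`. -/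
def RegularSystem (Fq : Finset (Finset α)) (Pq : Finset α) : Prop :=
  ∀ (k : ℕ) (c : ℕ → Finset α), c 0 = ∅ → c k = Pq →
    (∀ j < k, coverEdge Fq (c j) (c (j + 1))) → k = Pq.card


variable {α ι : Type*} [Fintype α] [DecidableEq α] [Fintype ι] [DecidableEq ι]

/-- The defining condition of `D^i`. -/
def Dcond (F : ι → Finset (Finset α)) (i : α) (K : ι → Finset α) : Prop :=
  ∀ q : ι, K q = ∅ ∨ (coverEdge (F q) ∅ (K q) ∧ i ∈ K q)

lemma qset_unique {K K' : ι → Finset α} {q : ι} {i : α}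
    (hagree : ∀ r, r ≠ q → K' r = K r) (hi : i ∈ Qset K K') : i ∈ K' q \ K q := by
  rcases Finset.mem_biUnion.1 hi with ⟨r, -, hr⟩
  by_cases h : r = q
  · exact h ▸ hr
  · rw [hagree r h] at hr
    simp at hr

lemma dcond_closed {F : ι → Finset (Finset α)} {i : α} {K K' : ι → Finset α}
    (hK : Dcond F i K) (h : symmEdge F i K K') : Dcond F i K' := by
  rcases h with ⟨⟨-, -, q, hcov, hagree⟩, hi⟩ | ⟨⟨-, -, q, hcov, hagree⟩, hi⟩
  · -- forward edge K → K'
    have hiq := qset_unique hagree hi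
    have hKq : K q = ∅ := by
      rcases hK q with h | ⟨-, hiK⟩
      · exact h
      · exact absurd hiK (Finset.mem_sdiff.1 hiq).2
    intro r
    by_cases hr : r = q
    · subst hr
      right
      rw [hKq] at hcov
      exact ⟨hcov, (Finset.mem_sdiff.1 hiq).1⟩
    · rw [hagree r hr]; exact hK r
  · -- backward edge K' → K
    have hiq := qset_unique hagree hi
    have hKq : coverEdge (F q) ∅ (K q) ∧ i ∈ K q := by
      rcases hK q with h | h
      · exfalso
        rw [h] at hcov
        exact absurd hcov.2.2.2 (fun _ => Finset.not_ssubset_empty _ hcov.2.2.1)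
      · exact h
    have hK'q : K' q = ∅ := hKq.1.2.2.2 _ hcov.1 (Finset.empty_subset _) hcov.2.2.1
    intro r
    by_cases hr : r = q
    · subst hr; exact Or.inl hK'q
    · rw [← hagree r hr]; exact hK r

lemma dcond_feasible {P : ι → Finset α} {F : ι → Finset (Finset α)} (hconf : IsGCC P F)
    {i : α} {K : ι → Finset α} (hK : Dcond F i K) : Feasible F K := by
  intro q
  rcases hK q with h | h
  · rw [h]; exact hconf.2.2.2.1 q
  · exact h.1.2.1

lemma dcond_update {F : ι → Finset (Finset α)} {i : α} {K : ι → Finset α}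
    (hK : Dcond F i K) (q : ι) : Dcond F i (Function.update K q ∅) := by
  intro r
  by_cases hr : r = q
  · subst hr; simp
  · rw [Function.update_of_ne hr]; exact hK r

lemma dcond_edge_update {P : ι → Finset α} {F : ι → Finset (Finset α)} (hconf : IsGCC P F)
    {i : α} {K : ι → Finset α} (hK : Dcond F i K) {q : ι} (hq : K q ≠ ∅) :
    agentEdge F i (Function.update K q ∅) K := by
  have hcov : coverEdge (F q) ∅ (K q) ∧ i ∈ K q := (hK q).resolve_left hq
  refine ⟨⟨dcond_feasible hconf (dcond_update hK q), dcond_feasible hconf hK,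
    q, ?_, fun r hr => (Function.update_of_ne hr _ _).symm⟩, ?_⟩
  · rw [Function.update_self]; exact hcov.1
  · refine Finset.mem_biUnion.2 ⟨q, Finset.mem_univ q, ?_⟩
    rw [Function.update_self]
    simpa using hcov.2

lemma dcond_path {P : ι → Finset α} {F : ι → Finset (Finset α)} (hconf : IsGCC P F)
    {i : α} {K : ι → Finset α} (hK : Dcond F i K) :
    Relation.ReflTransGen (symmEdge F i) emptyProfile K := by
  generalize hn : (Finset.univ.filter fun q : ι => K q ≠ ∅).card = n
  induction n generalizing K with
  | zero =>
    have : K = emptyProfile := by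
      funext q
      by_contra h
      have : q ∈ Finset.univ.filter fun q : ι => K q ≠ ∅ := by
        simp [h, emptyProfile] at h ⊢; simpa [emptyProfile] using h
      rw [Finset.card_eq_zero] at hn
      simp [hn] at this
    rw [this]
  | succ n ih =>
    have hne : (Finset.univ.filter fun q : ι => K q ≠ ∅).Nonempty := by
      rw [← Finset.card_pos, hn]; omega
    obtain ⟨q, hq⟩ := hne
    have hq' : K q ≠ ∅ := (Finset.mem_filter.1 hq).2
    set K0 := Function.update K q ∅ with hK0
    have hcard : (Finset.univ.filter fun r : ι => K0 r ≠ ∅).card = n := by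
      have : (Finset.univ.filter fun r : ι => K0 r ≠ ∅)
          = (Finset.univ.filter fun r : ι => K r ≠ ∅).erase q := by
        ext r
        by_cases hr : r = q <;>
          simp [hK0, Finset.mem_erase, hr, Function.update_of_ne, Function.update_self]
      rw [this, Finset.card_erase_of_mem hq, hn]; omega
    have hpath := ih (dcond_update hK q) hcard
    exact hpath.tail (Or.inl (dcond_edge_update hconf hK hq'))

/-- **Lemma (lem:S_emptyset).** The component of `Γ_F^i` containing the empty profile
`∅_M` is exactly the cartesian product `D^i` of the sets
`D^i_q = {K ∈ F_q : (∅, K) ∈ E_{F_q}, i ∈ K} ∪ {∅}`. -/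
theorem component_of_emptyProfile_eq_prod
    (P : ι → Finset α) (F : ι → Finset (Finset α)) (hconf : IsGCC P F)
    (i : α) (C : Finset (ι → Finset α)) (hC : IsComponent F i C)
    (h0 : emptyProfile ∈ C) :
    ∀ K : ι → Finset α,
      K ∈ C ↔ ∀ q : ι, K q = ∅ ∨ (coverEdge (F q) ∅ (K q) ∧ i ∈ K q) := by
  have hsymm : Symmetric (symmEdge F i) := fun K K' h => h.symm
  have hD0 : Dcond F i (emptyProfile : ι → Finset α) := fun q => Or.inl rfl
  intro K
  constructor
  · -- forward: every element of C satisfies Dcond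
    intro hKC
    have hrtg : Relation.ReflTransGen (symmEdge F i) emptyProfile K :=
      hC.2.1 emptyProfile h0 K hKC
    clear hKC
    induction hrtg with
    | refl => exact hD0
    | tail _ h ih => exact dcond_closed ih h
  · -- backward: D^i ⊆ C via maximality
    intro hKD
    set C' : Finset (ι → Finset α) := C ∪ Finset.univ.filter (Dcond F i) with hC'
    have hsub : C ⊆ C' := Finset.subset_union_left
    have hmem : ∀ L ∈ C', Relation.ReflTransGen (symmEdge F i) emptyProfile L := by
      intro L hL
      rcases Finset.mem_union.1 hL with h | h
      · exact hC.2.1 emptyProfile h0 L h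
      · exact dcond_path hconf (Finset.mem_filter.1 h).2
    have hCeq : C' = C := by
      refine hC.2.2 C' hsub ?_ ?_
      · intro L hL
        rcases Finset.mem_union.1 hL with h | h
        · exact hC.1 L h
        · have hD : Dcond F i L := (Finset.mem_filter.1 h).2
          by_cases hLe : L = emptyProfile
          · exact hC.1 L (hLe ▸ h0)
          · have : ∃ q, L q ≠ ∅ := by
              by_contra hc
              push_neg at hc
              exact hLe (funext fun q => hc q)
            obtain ⟨q, hq⟩ := this
            exact ⟨Function.update L q ∅, Or.inr (dcond_edge_update hconf hD hq)⟩
      · intro L hL L' hL'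
        exact ((@Relation.ReflTransGen.symmetric _ (symmEdge F i) ⟨fun _ _ h => hsymm h⟩).symm _ _ (hmem L hL)).trans (hmem L' hL')
    have : K ∈ C' := Finset.mem_union_right _ (Finset.mem_filter.2 ⟨Finset.mem_univ _, hKD⟩)
    exact hCeq ▸ this
end GCC
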